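/- For every pair of unit vectors z₁, z₂ ∈ S² and every ε > 0 there exist ρ > 0 and a twice continuously differentiable map u : ℝ → ℝ³ with ‖u(t)‖ = 1 for all t ∈ ℝ such that the associated chirality w(t) := u(t) × u'(t) satisfies: w(t) = z₁ for every t ≤ 0, w(t) = z₂ for every t ≥ ρ, and ∫_ℝ [(‖w(t)‖² − 1)² + ‖w'(t)‖²] dt ≤ ε. (Hence the optimal transition energy g(z₁,z₂) between any two chiralities of an S²-valued spin chain is zero.) -/

import Mathlib

open MeasureTheory Filter
open scoped RealInnerProductSpace

/-- The cross product on Euclidean `ℝ³`. -/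
noncomputable def cross3 (a b : EuclideanSpace ℝ (Fin 3)) : EuclideanSpace ℝ (Fin 3) :=
  (WithLp.equiv 2 (Fin 3 → ℝ)).symm
    (crossProduct ((WithLp.equiv 2 (Fin 3 → ℝ)) a) ((WithLp.equiv 2 (Fin 3 → ℝ)) b))
abbrev E3 := EuclideanSpace ℝ (Fin 3)
lemma cross3_apply0 (a b : E3) : cross3 a b 0 = a 1 * b 2 - a 2 * b 1 := by
  simp [cross3, crossProduct]
lemma cross3_apply1 (a b : E3) : cross3 a b 1 = a 2 * b 0 - a 0 * b 2 := by
  simp [cross3, crossProduct]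
lemma cross3_apply2 (a b : E3) : cross3 a b 2 = a 0 * b 1 - a 1 * b 0 := by
  simp [cross3, crossProduct]
lemma inner3 (a b : E3) : ⟪a,b⟫ = a 0 * b 0 + a 1 * b 1 + a 2 * b 2 := by
  simp [PiLp.inner_apply, Fin.sum_univ_three]; ring
lemma normsq3 (a : E3) : ‖a‖^2 = a 0^2 + a 1^2 + a 2^2 := by
  rw [← real_inner_self_eq_norm_sq, inner3]; ring
lemma ext3 {a b : E3} (h0 : a 0 = b 0) (h1 : a 1 = b 1) (h2 : a 2 = b 2) : a = b := by
  ext i; fin_cases i <;> assumption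

lemma cross3_lagrange (a b : E3) : ‖cross3 a b‖^2 = ‖a‖^2 * ‖b‖^2 - ⟪a,b⟫^2 := by
  simp only [normsq3, inner3, cross3_apply0, cross3_apply1, cross3_apply2]; ring

lemma norm_cross3_le (a b : E3) : ‖cross3 a b‖ ≤ ‖a‖ * ‖b‖ := by
  have h := cross3_lagrange a b
  nlinarith [norm_nonneg (cross3 a b), norm_nonneg a, norm_nonneg b, sq_nonneg (⟪a,b⟫),
    mul_nonneg (norm_nonneg a) (norm_nonneg b)]

lemma cross3_add_left (a b c : E3) : cross3 (a + b) c = cross3 a c + cross3 b c := by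
  apply ext3 <;> simp [cross3_apply0, cross3_apply1, cross3_apply2] <;> ring
lemma cross3_add_right (a b c : E3) : cross3 a (b + c) = cross3 a b + cross3 a c := by
  apply ext3 <;> simp [cross3_apply0, cross3_apply1, cross3_apply2] <;> ring
lemma cross3_smul_left (r : ℝ) (a b : E3) : cross3 (r • a) b = r • cross3 a b := by
  apply ext3 <;> simp [cross3_apply0, cross3_apply1, cross3_apply2] <;> ring
lemma cross3_smul_right (r : ℝ) (a b : E3) : cross3 a (r • b) = r • cross3 a b := by
  apply ext3 <;> simp [cross3_apply0, cross3_apply1, cross3_apply2] <;> ring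
lemma cross3_self (a : E3) : cross3 a a = 0 := by
  apply ext3 <;> simp [cross3_apply0, cross3_apply1, cross3_apply2] <;> ring
lemma cross3_neg (a b : E3) : cross3 a b = - cross3 b a := by
  apply ext3 <;> simp [cross3_apply0, cross3_apply1, cross3_apply2] <;> ring
lemma cross3_bac_cab (a b c : E3) : cross3 a (cross3 b c) = ⟪a,c⟫ • b - ⟪a,b⟫ • c := by
  apply ext3 <;>
    simp [cross3_apply0, cross3_apply1, cross3_apply2, inner3, Fin.sum_univ_three] <;> ring

noncomputable def crossₗ : E3 →ₗ[ℝ] E3 →ₗ[ℝ] E3 :=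
  LinearMap.mk₂ ℝ cross3 cross3_add_left cross3_smul_left cross3_add_right cross3_smul_right

noncomputable def crossL : E3 →L[ℝ] E3 →L[ℝ] E3 :=
  LinearMap.mkContinuous₂ crossₗ 1 (by
    intro a b
    simpa [crossₗ] using norm_cross3_le a b)

@[simp] lemma crossL_apply (a b : E3) : crossL a b = cross3 a b := rfl

lemma HasDerivAt.cross3' {F G : ℝ → E3} {F' G' : E3} {t : ℝ}
    (hF : HasDerivAt F F' t) (hG : HasDerivAt G G' t) :
    HasDerivAt (fun s => cross3 (F s) (G s)) (cross3 F' (G t) + cross3 (F t) G') t := by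
  have h1 : HasDerivAt (fun s => crossL (F s)) (crossL F') t :=
    crossL.hasFDerivAt.comp_hasDerivAt t hF
  simpa using h1.clm_apply hG

/-- Rotation about axis `n` by angle with cosine `c`, sine `s`. -/
noncomputable def Rot (n : E3) (c s : ℝ) (v : E3) : E3 :=
  (⟪v, n⟫ * (1 - c)) • n + c • v + s • cross3 n v

lemma Rot_apply (n : E3) (c s : ℝ) (v : E3) (i : Fin 3) :
    Rot n c s v i = (⟪v, n⟫ * (1 - c)) * n i + c * v i + s * cross3 n v i := by
  simp [Rot]

lemma Rot_id (n v : E3) : Rot n 1 0 v = v := by simp [Rot]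

lemma Rot_norm (n : E3) (c s : ℝ) (hn : n 0^2 + n 1^2 + n 2^2 = 1)
    (hcs : c^2 + s^2 = 1) (v : E3) : ‖Rot n c s v‖ = ‖v‖ := by
  have h : ‖Rot n c s v‖^2 = ‖v‖^2 := by
    rw [normsq3, normsq3]
    simp only [Rot_apply, inner3, cross3_apply0, cross3_apply1, cross3_apply2]
    linear_combination (n 0^2*c^2*v 0^2 + (-2)*n 0^2*c*v 0^2 + n 0^2*v 0^2 + (2)*n 0*n 1*c^2*v 0*v 1 + (-4)*n 0*n 1*c*v 0*v 1 + (2)*n 0*n 1*v 0*v 1 + (2)*n 0*n 2*c^2*v 0*v 2 + (-4)*n 0*n 2*c*v 0*v 2 + (2)*n 0*n 2*v 0*v 2 + n 1^2*c^2*v 1^2 + (-2)*n 1^2*c*v 1^2 + n 1^2*v 1^2 + (2)*n 1*n 2*c^2*v 1*v 2 + (-4)*n 1*n 2*c*v 1*v 2 + (2)*n 1*n 2*v 1*v 2 + n 2^2*c^2*v 2^2 + (-2)*n 2^2*c*v 2^2 + n 2^2*v 2^2 + (-1)*c^2*v 0^2 + s^2*v 1^2 + s^2*v 2^2 + v 0^2)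 * hn + ((-2)*n 0*n 1*v 0*v 1 + (-2)*n 0*n 2*v 0*v 2 + n 1^2*v 0^2 + (-1)*n 1^2*v 1^2 + (-2)*n 1*n 2*v 1*v 2 + n 2^2*v 0^2 + (-1)*n 2^2*v 2^2 + v 1^2 + v 2^2) * hcs
  have h1 : 0 ≤ ‖Rot n c s v‖ := norm_nonneg _
  nlinarith [norm_nonneg v]

lemma Rot_cross (n : E3) (c s : ℝ) (hn : n 0^2 + n 1^2 + n 2^2 = 1)
    (hcs : c^2 + s^2 = 1) (v w : E3) :
    cross3 (Rot n c s v) (Rot n c s w) = Rot n c s (cross3 v w) := by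
  apply ext3
  · simp only [Rot_apply, inner3, cross3_apply0, cross3_apply1, cross3_apply2]
    linear_combination ((-1)*n 1*c*s*v 0*w 1 + n 1*c*s*v 1*w 0 + n 1*s*v 0*w 1 + (-1)*n 1*s*v 1*w 0 + (-1)*n 2*c*s*v 0*w 2 + n 2*c*s*v 2*w 0 + n 2*s*v 0*w 2 + (-1)*n 2*s*v 2*w 0 + c*v 1*w 2 + (-1)*c*v 2*w 1 + s^2*v 1*w 2 + (-1)*s^2*v 2*w 1 + (-1)*v 1*w 2 + v 2*w 1) * hn + ((-1)*n 0*n 1*v 0*w 2 + n 0*n 1*v 2*w 0 + n 0*n 2*v 0*w 1 + (-1)*n 0*n 2*v 1*w 0 + (-1)*n 1^2*v 1*w 2 + n 1^2*v 2*w 1 + (-1)*n 2^2*v 1*w 2 + n 2^2*v 2*w 1 + v 1*w 2 + (-1)*v 2*w 1) * hcs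
  · simp only [Rot_apply, inner3, cross3_apply0, cross3_apply1, cross3_apply2]
    linear_combination (n 0*c*s*v 0*w 1 + (-1)*n 0*c*s*v 1*w 0 + (-1)*n 0*s*v 0*w 1 + n 0*s*v 1*w 0 + (-1)*n 2*c*s*v 1*w 2 + n 2*c*s*v 2*w 1 + n 2*s*v 1*w 2 + (-1)*n 2*s*v 2*w 1 + c^2*v 0*w 2 + (-1)*c^2*v 2*w 0 + (-1)*c*v 0*w 2 + c*v 2*w 0) * hn + (n 0*n 1*v 1*w 2 + (-1)*n 0*n 1*v 2*w 1 + (-1)*n 1^2*v 0*w 2 + n 1^2*v 2*w 0 + n 1*n 2*v 0*w 1 + (-1)*n 1*n 2*v 1*w 0) * hcs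
  · simp only [Rot_apply, inner3, cross3_apply0, cross3_apply1, cross3_apply2]
    linear_combination (n 0*c*s*v 0*w 2 + (-1)*n 0*c*s*v 2*w 0 + (-1)*n 0*s*v 0*w 2 + n 0*s*v 2*w 0 + n 1*c*s*v 1*w 2 + (-1)*n 1*c*s*v 2*w 1 + (-1)*n 1*s*v 1*w 2 + n 1*s*v 2*w 1 + (-1)*c^2*v 0*w 1 + c^2*v 1*w 0 + c*v 0*w 1 + (-1)*c*v 1*w 0) * hn + (n 0*n 2*v 1*w 2 + (-1)*n 0*n 2*v 2*w 1 + (-1)*n 1*n 2*v 0*w 2 + n 1*n 2*v 2*w 0 + n 2^2*v 0*w 1 + (-1)*n 2^2*v 1*w 0) * hcs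


lemma Rot_pi (n v : E3) : Rot n (-1) 0 v = (2 * ⟪v, n⟫) • n - v := by
  apply ext3 <;> simp [Rot_apply, cross3_apply0, cross3_apply1, cross3_apply2] <;> ring

noncomputable def st : ℝ → ℝ := Real.smoothTransition
noncomputable def std : ℝ → ℝ := deriv st
noncomputable def stdd : ℝ → ℝ := deriv std

lemma st_contDiff {m : ℕ∞} : ContDiff ℝ m st := Real.smoothTransition.contDiff
lemma std_contDiff {m : ℕ∞} : ContDiff ℝ m std := by
  have h := contDiff_infty_iff_deriv.mp (st_contDiff (m := ⊤))
  exact h.2.of_le (by exact_mod_cast le_top)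

lemma stdd_contDiff {m : ℕ∞} : ContDiff ℝ m stdd := by
  have h := contDiff_infty_iff_deriv.mp (std_contDiff (m := ⊤))
  exact h.2.of_le (by exact_mod_cast le_top)

lemma hasDerivAt_st (x : ℝ) : HasDerivAt st (std x) x :=
  ((st_contDiff (m := 1)).differentiable (by simp)).differentiableAt.hasDerivAt


lemma hasDerivAt_std (x : ℝ) : HasDerivAt std (stdd x) x :=
  ((std_contDiff (m := 1)).differentiable (by simp)).differentiableAt.hasDerivAt

lemma std_eq_zero {x : ℝ} (hx : x < 0 ∨ 1 < x) : std x = 0 := by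
  rcases hx with hx | hx
  · have hev : st =ᶠ[nhds x] fun _ => (0:ℝ) := by
      filter_upwards [Iio_mem_nhds hx] with y hy
      exact Real.smoothTransition.zero_of_nonpos (le_of_lt hy)
    rw [std, hev.deriv_eq]; simp
  · have hev : st =ᶠ[nhds x] fun _ => (1:ℝ) := by
      filter_upwards [Ioi_mem_nhds hx] with y hy
      exact Real.smoothTransition.one_of_one_le (le_of_lt hy)
    rw [std, hev.deriv_eq]; simp

lemma stdd_eq_zero {x : ℝ} (hx : x < 0 ∨ 1 < x) : stdd x = 0 := by
  rcases hx with hx | hx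
  · have hev : std =ᶠ[nhds x] fun _ => (0:ℝ) := by
      filter_upwards [Iio_mem_nhds hx] with y hy
      exact std_eq_zero (Or.inl hy)
    rw [stdd, hev.deriv_eq]; simp
  · have hev : std =ᶠ[nhds x] fun _ => (0:ℝ) := by
      filter_upwards [Ioi_mem_nhds hx] with y hy
      exact std_eq_zero (Or.inr hy)
    rw [stdd, hev.deriv_eq]; simp

/-- There is a common bound for `|std|` and `|stdd|`. -/
lemma exists_bound_st : ∃ M : ℝ, 1 ≤ M ∧ ∀ x : ℝ, |std x| ≤ M ∧ |stdd x| ≤ M := by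
  obtain ⟨C₁, hC₁⟩ := (isCompact_Icc (a := (0:ℝ)) (b := 1)).exists_bound_of_continuousOn
    ((std_contDiff (m := 0)).continuous.continuousOn)
  obtain ⟨C₂, hC₂⟩ := (isCompact_Icc (a := (0:ℝ)) (b := 1)).exists_bound_of_continuousOn
    ((stdd_contDiff (m := 0)).continuous.continuousOn)
  refine ⟨max 1 (max C₁ C₂), le_max_left _ _, fun x => ?_⟩
  by_cases hx : x ∈ Set.Icc (0:ℝ) 1
  · constructor
    · calc |std x| = ‖std x‖ := (Real.norm_eq_abs _).symm
        _ ≤ C₁ := hC₁ x hx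
        _ ≤ max 1 (max C₁ C₂) := le_trans (le_max_left _ _) (le_max_right _ _)
    · calc |stdd x| = ‖stdd x‖ := (Real.norm_eq_abs _).symm
        _ ≤ C₂ := hC₂ x hx
        _ ≤ max 1 (max C₁ C₂) := le_trans (le_max_right _ _) (le_max_right _ _)
  · have hx' : x < 0 ∨ 1 < x := by
      simp only [Set.mem_Icc, not_and_or, not_le] at hx
      tauto
    rw [std_eq_zero hx', stdd_eq_zero hx']
    simp only [abs_zero]
    constructor <;> exact le_trans zero_le_one (le_max_left _ _)


noncomputable section
open Real

def ag (ρ t : ℝ) : ℝ := 2 * (t / ρ) - 1/2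
def th (ρ t : ℝ) : ℝ := π * st (ag ρ t)
def thd (ρ t : ℝ) : ℝ := π * (std (ag ρ t) * (2 / ρ))
def thdd (ρ t : ℝ) : ℝ := π * (stdd (ag ρ t) * (2 / ρ) * (2 / ρ))

def Pf (e f : E3) (t : ℝ) : E3 := cos t • e + sin t • f
def Pd (e f : E3) (t : ℝ) : E3 := (-sin t) • e + cos t • f

def Bf (n e f : E3) (ρ t : ℝ) : E3 :=
  (⟪Pf e f t, n⟫ * sin (th ρ t)) • n + (-sin (th ρ t)) • Pf e f t
    + cos (th ρ t) • cross3 n (Pf e f t)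

def Bdf (n e f : E3) (ρ t : ℝ) : E3 :=
  (⟪Pd e f t, n⟫ * sin (th ρ t) + ⟪Pf e f t, n⟫ * (cos (th ρ t) * thd ρ t)) • n
    + (-(cos (th ρ t) * thd ρ t)) • Pf e f t + (-sin (th ρ t)) • Pd e f t
    + (-(sin (th ρ t) * thd ρ t)) • cross3 n (Pf e f t)
    + cos (th ρ t) • cross3 n (Pd e f t)

def B1f (n g : E3) (ρ t : ℝ) : E3 :=
  (⟪g, n⟫ * sin (th ρ t)) • n + (-sin (th ρ t)) • g + cos (th ρ t) • cross3 n g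

def uf (n e f : E3) (ρ t : ℝ) : E3 := Rot n (cos (th ρ t)) (sin (th ρ t)) (Pf e f t)
def ud (n e f : E3) (ρ t : ℝ) : E3 :=
  Rot n (cos (th ρ t)) (sin (th ρ t)) (Pd e f t) + thd ρ t • Bf n e f ρ t

def Gf (n g : E3) (ρ t : ℝ) : E3 := Rot n (cos (th ρ t)) (sin (th ρ t)) g
def Cf (n e f : E3) (ρ t : ℝ) : E3 := cross3 (uf n e f ρ t) (Bf n e f ρ t)
def Cd (n e f : E3) (ρ t : ℝ) : E3 :=
  cross3 (ud n e f ρ t) (Bf n e f ρ t) + cross3 (uf n e f ρ t) (Bdf n e f ρ t)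
def wd (n e f g : E3) (ρ t : ℝ) : E3 :=
  thd ρ t • B1f n g ρ t + (thd ρ t • Cd n e f ρ t + thdd ρ t • Cf n e f ρ t)

lemma hasDerivAt_ag (ρ t : ℝ) : HasDerivAt (ag ρ) (2/ρ) t := by
  have h : HasDerivAt (fun t : ℝ => 2 * (t / ρ) - 1/2) (2 * (1/ρ)) t :=
    (((hasDerivAt_id t).div_const ρ).const_mul 2).sub_const _
  rw [show 2 * (1/ρ) = 2/ρ by ring] at h
  exact h

lemma hasDerivAt_th (ρ t : ℝ) : HasDerivAt (th ρ) (thd ρ t) t := by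
  have h := ((hasDerivAt_st (ag ρ t)).comp t (hasDerivAt_ag ρ t)).const_mul π
  exact h

lemma hasDerivAt_thd (ρ t : ℝ) : HasDerivAt (thd ρ) (thdd ρ t) t := by
  have h := (((hasDerivAt_std (ag ρ t)).comp t (hasDerivAt_ag ρ t)).mul_const (2/ρ)).const_mul π
  exact h

lemma hasDerivAt_cth (ρ t : ℝ) :
    HasDerivAt (fun t => cos (th ρ t)) (-sin (th ρ t) * thd ρ t) t :=
  (Real.hasDerivAt_cos (th ρ t)).comp t (hasDerivAt_th ρ t)

lemma hasDerivAt_sth (ρ t : ℝ) :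
    HasDerivAt (fun t => sin (th ρ t)) (cos (th ρ t) * thd ρ t) t :=
  (Real.hasDerivAt_sin (th ρ t)).comp t (hasDerivAt_th ρ t)

lemma hasDerivAt_Pf (e f : E3) (t : ℝ) : HasDerivAt (Pf e f) (Pd e f t) t := by
  unfold Pf Pd
  exact ((Real.hasDerivAt_cos t).smul_const e).add ((Real.hasDerivAt_sin t).smul_const f)

lemma hasDerivAt_Pd (e f : E3) (t : ℝ) :
    HasDerivAt (Pd e f) ((-cos t) • e + (-sin t) • f) t := by
  unfold Pd
  exact (((Real.hasDerivAt_sin t).neg).smul_const e).add (((Real.hasDerivAt_cos t)).smul_const f)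

/-- Generic derivative of a rotating-frame expression. -/
lemma hasDerivAt_rot (n : E3) {c s : ℝ → ℝ} {v : ℝ → E3} {c' s' : ℝ} {v' : E3} {t : ℝ}
    (hc : HasDerivAt c c' t) (hs : HasDerivAt s s' t) (hv : HasDerivAt v v' t) :
    HasDerivAt (fun x => Rot n (c x) (s x) (v x))
      ((⟪v', n⟫ * (1 - c t) - ⟪v t, n⟫ * c') • n + c' • v t + c t • v'
        + s' • cross3 n (v t) + s t • cross3 n v') t := by
  have hip : HasDerivAt (fun x => ⟪v x, n⟫) ⟪v', n⟫ t := by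
    simpa using HasDerivAt.inner ℝ hv (hasDerivAt_const t n)
  have h1 : HasDerivAt (fun x => (⟪v x, n⟫ * (1 - c x)) • n)
      ((⟪v', n⟫ * (1 - c t) - ⟪v t, n⟫ * c') • n) t := by
    have := (hip.mul ((hasDerivAt_const t (1:ℝ)).sub hc)).smul_const n
    convert this using 2 <;> (try rfl) <;> (try simp only [Pi.sub_apply]) <;> try ring
  have h2 : HasDerivAt (fun x => c x • v x) (c t • v' + c' • v t) t := hc.smul hv
  have hcr : HasDerivAt (fun x => cross3 n (v x)) (cross3 n v') t := by
    have := (crossL n).hasFDerivAt.comp_hasDerivAt t hv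
    simpa [Function.comp_def] using this
  have h3 : HasDerivAt (fun x => s x • cross3 n (v x))
      (s t • cross3 n v' + s' • cross3 n (v t)) t := hs.smul hcr
  have := (h1.add h2).add h3
  have heq : (fun x => Rot n (c x) (s x) (v x))
      = fun x => (⟪v x, n⟫ * (1 - c x)) • n + c x • v x + s x • cross3 n (v x) := by
    funext x; rfl
  rw [heq]
  convert this using 1 <;> try rfl
  module

lemma hasDerivAt_uf (n e f : E3) (ρ t : ℝ) :
    HasDerivAt (uf n e f ρ) (ud n e f ρ t) t := by
  have h := hasDerivAt_rot n (hasDerivAt_cth ρ t) (hasDerivAt_sth ρ t) (hasDerivAt_Pf e f t)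
  have heq : uf n e f ρ = fun x => Rot n (cos (th ρ x)) (sin (th ρ x)) (Pf e f x) := rfl
  rw [heq]
  convert h using 1 <;> try rfl
  unfold ud Rot Bf
  module

lemma hasDerivAt_Bf (n e f : E3) (ρ t : ℝ) :
    HasDerivAt (Bf n e f ρ) (Bdf n e f ρ t) t := by
  have hip : HasDerivAt (fun x => ⟪Pf e f x, n⟫) ⟪Pd e f t, n⟫ t := by
    simpa using HasDerivAt.inner ℝ (hasDerivAt_Pf e f t) (hasDerivAt_const t n)
  have h1 : HasDerivAt (fun x => (⟪Pf e f x, n⟫ * sin (th ρ x)) • n)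
      ((⟪Pd e f t, n⟫ * sin (th ρ t) + ⟪Pf e f t, n⟫ * (cos (th ρ t) * thd ρ t)) • n) t := by
    have := (hip.mul (hasDerivAt_sth ρ t)).smul_const n
    convert this using 2 <;> (try rfl) <;> try ring
  have h2 : HasDerivAt (fun x => (-sin (th ρ x)) • Pf e f x)
      ((-sin (th ρ t)) • Pd e f t + (-(cos (th ρ t) * thd ρ t)) • Pf e f t) t := by
    have := ((hasDerivAt_sth ρ t).neg).smul (hasDerivAt_Pf e f t)
    exact this
  have hcr : HasDerivAt (fun x => cross3 n (Pf e f x)) (cross3 n (Pd e f t)) t := by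
    simpa [Function.comp_def] using (crossL n).hasFDerivAt.comp_hasDerivAt t (hasDerivAt_Pf e f t)
  have h3 : HasDerivAt (fun x => cos (th ρ x) • cross3 n (Pf e f x))
      (cos (th ρ t) • cross3 n (Pd e f t) + (-sin (th ρ t) * thd ρ t) • cross3 n (Pf e f t)) t :=
    (hasDerivAt_cth ρ t).smul hcr
  have h := (h1.add h2).add h3
  have heq : Bf n e f ρ = fun x => (⟪Pf e f x, n⟫ * sin (th ρ x)) • n
      + (-sin (th ρ x)) • Pf e f x + cos (th ρ x) • cross3 n (Pf e f x) := rfl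
  rw [heq]
  convert h using 1 <;> try rfl
  unfold Bdf
  module

lemma hasDerivAt_Gf (n g : E3) (ρ t : ℝ) :
    HasDerivAt (Gf n g ρ) (thd ρ t • B1f n g ρ t) t := by
  have h := hasDerivAt_rot n (hasDerivAt_cth ρ t) (hasDerivAt_sth ρ t) (hasDerivAt_const t g)
  have heq : Gf n g ρ = fun x => Rot n (cos (th ρ x)) (sin (th ρ x)) g := rfl
  rw [heq]
  convert h using 1 <;> try rfl
  have hz : cross3 n (0 : E3) = 0 := by
    apply ext3 <;> simp [cross3_apply0, cross3_apply1, cross3_apply2]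
  rw [hz]
  unfold B1f
  simp only [inner_zero_left]
  try module

lemma hasDerivAt_Cf (n e f : E3) (ρ t : ℝ) :
    HasDerivAt (Cf n e f ρ) (Cd n e f ρ t) t := by
  exact (hasDerivAt_uf n e f ρ t).cross3' (hasDerivAt_Bf n e f ρ t)

lemma hasDerivAt_w (n e f g : E3) (ρ t : ℝ) :
    HasDerivAt (fun x => Gf n g ρ x + thd ρ x • Cf n e f ρ x) (wd n e f g ρ t) t := by
  have h := (hasDerivAt_Gf n g ρ t).add ((hasDerivAt_thd ρ t).smul (hasDerivAt_Cf n e f ρ t))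
  exact h

end

noncomputable section
open Real

lemma norm_eq_one_of_sq {x : E3} (h : ‖x‖^2 = 1) : ‖x‖ = 1 := by
  nlinarith [norm_nonneg x]

lemma comp_of_norm {n : E3} (hn : ‖n‖ = 1) : n 0^2 + n 1^2 + n 2^2 = 1 := by
  rw [← normsq3, hn]; norm_num

section frame
variable {e f n : E3} (he : ‖e‖ = 1) (hf : ‖f‖ = 1) (hef : ⟪e,f⟫ = 0)

include he hf hef in
lemma norm_comb_sq (a b : ℝ) : ‖a • e + b • f‖^2 = a^2 + b^2 := by
  rw [norm_add_sq_real, real_inner_smul_left, real_inner_smul_right, hef,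
    norm_smul, norm_smul, he, hf]
  simp [Real.norm_eq_abs, sq_abs]

include he hf hef in
lemma norm_Pf (t : ℝ) : ‖Pf e f t‖ = 1 := by
  apply norm_eq_one_of_sq
  rw [Pf, norm_comb_sq he hf hef]
  exact Real.cos_sq_add_sin_sq t

include he hf hef in
lemma norm_Pd (t : ℝ) : ‖Pd e f t‖ = 1 := by
  apply norm_eq_one_of_sq
  rw [Pd, norm_comb_sq he hf hef]
  rw [neg_pow]
  simpa using Real.sin_sq_add_cos_sq t

include he hf hef in
lemma norm_cross_ef : ‖cross3 e f‖ = 1 := by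
  apply norm_eq_one_of_sq
  rw [cross3_lagrange, he, hf, hef]
  norm_num

lemma cross3_Pf_Pd (e f : E3) (t : ℝ) : cross3 (Pf e f t) (Pd e f t) = cross3 e f := by
  apply ext3 <;>
    simp only [Pf, Pd, cross3_apply0, cross3_apply1, cross3_apply2, PiLp.add_apply,
      PiLp.smul_apply, smul_eq_mul]
  · linear_combination (e 1 * f 2 - e 2 * f 1) * Real.sin_sq_add_cos_sq t
  · linear_combination (e 2 * f 0 - e 0 * f 2) * Real.sin_sq_add_cos_sq t
  · linear_combination (e 0 * f 1 - e 1 * f 0) * Real.sin_sq_add_cos_sq t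

variable (hn : ‖n‖ = 1)

include hn in
lemma norm_Rot (c s : ℝ) (hcs : c^2 + s^2 = 1) (v : E3) : ‖Rot n c s v‖ = ‖v‖ :=
  Rot_norm n c s (comp_of_norm hn) hcs v

include he hf hef hn in
lemma norm_uf (ρ t : ℝ) : ‖uf n e f ρ t‖ = 1 := by
  rw [uf, norm_Rot hn _ _ (Real.cos_sq_add_sin_sq _), norm_Pf he hf hef]

include he hf hef hn in
lemma w_eq (ρ : ℝ) : (fun x => cross3 (uf n e f ρ x) (ud n e f ρ x))
    = fun x => Gf n (cross3 e f) ρ x + thd ρ x • Cf n e f ρ x := by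
  funext x
  rw [ud, cross3_add_right, cross3_smul_right, uf,
    Rot_cross n _ _ (comp_of_norm hn) (Real.cos_sq_add_sin_sq _), cross3_Pf_Pd]
  rfl
end frame

section evals
variable {ρ t : ℝ}

lemma ag_neg (hρ : 0 < ρ) (ht : t ≤ 0) : ag ρ t < 0 := by
  have : t / ρ ≤ 0 := div_nonpos_of_nonpos_of_nonneg ht (le_of_lt hρ)
  unfold ag; nlinarith

lemma ag_gt (hρ : 0 < ρ) (ht : ρ ≤ t) : 1 < ag ρ t := by
  have : 1 ≤ t / ρ := (one_le_div hρ).mpr ht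
  unfold ag; nlinarith

lemma th_of_neg (hρ : 0 < ρ) (ht : t ≤ 0) :
    th ρ t = 0 ∧ thd ρ t = 0 ∧ thdd ρ t = 0 := by
  have h := ag_neg hρ ht
  refine ⟨?_, ?_, ?_⟩
  · rw [th, st, Real.smoothTransition.zero_of_nonpos (le_of_lt h), mul_zero]
  · rw [thd, std_eq_zero (Or.inl h)]; ring
  · rw [thdd, stdd_eq_zero (Or.inl h)]; ring

lemma th_of_ge (hρ : 0 < ρ) (ht : ρ ≤ t) :
    th ρ t = π ∧ thd ρ t = 0 ∧ thdd ρ t = 0 := by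
  have h := ag_gt hρ ht
  refine ⟨?_, ?_, ?_⟩
  · rw [th, st, Real.smoothTransition.one_of_one_le (le_of_lt h), mul_one]
  · rw [thd, std_eq_zero (Or.inr h)]; ring
  · rw [thdd, stdd_eq_zero (Or.inr h)]; ring

lemma uf_of_neg (n e f : E3) (hρ : 0 < ρ) (ht : t ≤ 0) :
    uf n e f ρ t = Pf e f t ∧ ud n e f ρ t = Pd e f t := by
  obtain ⟨h1, h2, -⟩ := th_of_neg hρ ht
  constructor
  · rw [uf, h1, Real.cos_zero, Real.sin_zero, Rot_id]
  · rw [ud, h1, h2, Real.cos_zero, Real.sin_zero, Rot_id, zero_smul, add_zero]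

lemma uf_of_ge (n e f : E3) (hρ : 0 < ρ) (ht : ρ ≤ t) :
    uf n e f ρ t = Rot n (-1) 0 (Pf e f t) ∧ ud n e f ρ t = Rot n (-1) 0 (Pd e f t) := by
  obtain ⟨h1, h2, -⟩ := th_of_ge hρ ht
  constructor
  · rw [uf, h1, Real.cos_pi, Real.sin_pi]
  · rw [ud, h1, h2, Real.cos_pi, Real.sin_pi, zero_smul, add_zero]

end evals
end

noncomputable section
open Real

section bounds
variable {n e f g : E3} {ρ t M : ℝ}
variable (he : ‖e‖ = 1) (hf : ‖f‖ = 1) (hef : ⟪e,f⟫ = 0) (hn : ‖n‖ = 1)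
variable (hρ : 1 ≤ ρ) (hM1 : 1 ≤ M) (hMb : ∀ x : ℝ, |std x| ≤ M ∧ |stdd x| ≤ M)

include hρ hM1 hMb in
lemma thd_bound : |thd ρ t| * ρ ≤ 7 * M ∧ |thdd ρ t| * ρ ≤ 13 * M := by
  have h0 : 0 < ρ := lt_of_lt_of_le one_pos hρ
  have hst := (hMb (ag ρ t)).1
  have hstd := (hMb (ag ρ t)).2
  have hπ : π < 3.15 := Real.pi_lt_d2
  have hπ0 : 0 < π := Real.pi_pos
  constructor
  · have h1 : |thd ρ t| * ρ = π * |std (ag ρ t)| * 2 := by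
      rw [thd, abs_mul, abs_mul, abs_div, abs_of_pos hπ0, abs_of_pos h0,
        abs_of_nonneg (by norm_num : (0:ℝ) ≤ 2)]
      field_simp
    rw [h1]
    nlinarith [abs_nonneg (std (ag ρ t))]
  · have h1 : |thdd ρ t| * (ρ * ρ) = π * |stdd (ag ρ t)| * 4 := by
      rw [thdd, abs_mul, abs_mul, abs_mul, abs_div, abs_of_pos hπ0, abs_of_pos h0,
        abs_of_nonneg (by norm_num : (0:ℝ) ≤ 2)]
      field_simp
      ring
    have h2 : |thdd ρ t| * ρ ≤ |thdd ρ t| * (ρ * ρ) := by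
      nlinarith [mul_nonneg (mul_nonneg (abs_nonneg (thdd ρ t)) (le_of_lt h0))
        (sub_nonneg.mpr hρ)]
    nlinarith [abs_nonneg (stdd (ag ρ t))]

include he hf hef hn in
lemma inner_Pf_n_bound : |⟪Pf e f t, n⟫| ≤ 1 := by
  calc |⟪Pf e f t, n⟫| ≤ ‖Pf e f t‖ * ‖n‖ := abs_real_inner_le_norm _ _
    _ = 1 := by rw [norm_Pf he hf hef, hn]; ring

include he hf hef hn in
lemma inner_Pd_n_bound : |⟪Pd e f t, n⟫| ≤ 1 := by
  calc |⟪Pd e f t, n⟫| ≤ ‖Pd e f t‖ * ‖n‖ := abs_real_inner_le_norm _ _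
    _ = 1 := by rw [norm_Pd he hf hef, hn]; ring

include he hf hef hn in
lemma norm_Bf_le : ‖Bf n e f ρ t‖ ≤ 3 := by
  have h := norm_add₃_le (E := E3) (a := (⟪Pf e f t, n⟫ * sin (th ρ t)) • n)
    (b := (-sin (th ρ t)) • Pf e f t) (c := cos (th ρ t) • cross3 n (Pf e f t))
  rw [Bf]
  refine le_trans h ?_
  have e1 : ‖(⟪Pf e f t, n⟫ * sin (th ρ t)) • n‖ ≤ 1 := by
    rw [norm_smul, hn, Real.norm_eq_abs, abs_mul, mul_one]
    nlinarith [inner_Pf_n_bound he hf hef hn (t := t), Real.abs_sin_le_one (th ρ t),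
      abs_nonneg (⟪Pf e f t, n⟫), abs_nonneg (sin (th ρ t))]
  have e2 : ‖(-sin (th ρ t)) • Pf e f t‖ ≤ 1 := by
    rw [norm_smul, norm_Pf he hf hef, Real.norm_eq_abs, abs_neg, mul_one]
    exact Real.abs_sin_le_one _
  have e3 : ‖cos (th ρ t) • cross3 n (Pf e f t)‖ ≤ 1 := by
    rw [norm_smul, Real.norm_eq_abs]
    have : ‖cross3 n (Pf e f t)‖ ≤ 1 := by
      calc ‖cross3 n (Pf e f t)‖ ≤ ‖n‖ * ‖Pf e f t‖ := norm_cross3_le _ _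
        _ = 1 := by rw [norm_Pf he hf hef, hn]; ring
    nlinarith [Real.abs_cos_le_one (th ρ t), abs_nonneg (cos (th ρ t)),
      norm_nonneg (cross3 n (Pf e f t))]
  linarith

include hn in
lemma norm_B1f_le (hg : ‖g‖ = 1) : ‖B1f n g ρ t‖ ≤ 3 := by
  have h := norm_add₃_le (E := E3) (a := (⟪g, n⟫ * sin (th ρ t)) • n)
    (b := (-sin (th ρ t)) • g) (c := cos (th ρ t) • cross3 n g)
  rw [B1f]
  refine le_trans h ?_
  have hgn : |⟪g, n⟫| ≤ 1 := by
    calc |⟪g, n⟫| ≤ ‖g‖ * ‖n‖ := abs_real_inner_le_norm _ _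
      _ = 1 := by rw [hg, hn]; ring
  have e1 : ‖(⟪g, n⟫ * sin (th ρ t)) • n‖ ≤ 1 := by
    rw [norm_smul, hn, Real.norm_eq_abs, abs_mul, mul_one]
    nlinarith [Real.abs_sin_le_one (th ρ t), abs_nonneg (⟪g, n⟫), abs_nonneg (sin (th ρ t))]
  have e2 : ‖(-sin (th ρ t)) • g‖ ≤ 1 := by
    rw [norm_smul, hg, Real.norm_eq_abs, abs_neg, mul_one]
    exact Real.abs_sin_le_one _
  have e3 : ‖cos (th ρ t) • cross3 n g‖ ≤ 1 := by
    rw [norm_smul, Real.norm_eq_abs]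
    have : ‖cross3 n g‖ ≤ 1 := by
      calc ‖cross3 n g‖ ≤ ‖n‖ * ‖g‖ := norm_cross3_le _ _
        _ = 1 := by rw [hg, hn]; ring
    nlinarith [Real.abs_cos_le_one (th ρ t), abs_nonneg (cos (th ρ t)), norm_nonneg (cross3 n g)]
  linarith

include he hf hef hn in
lemma norm_Bdf_le : ‖Bdf n e f ρ t‖ ≤ 3 + 3 * |thd ρ t| := by
  rw [Bdf]
  have T0 : (0:ℝ) ≤ |thd ρ t| := abs_nonneg _
  have hs1 : |sin (th ρ t)| ≤ 1 := Real.abs_sin_le_one _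
  have hc1 : |cos (th ρ t)| ≤ 1 := Real.abs_cos_le_one _
  have hnP : ‖cross3 n (Pf e f t)‖ ≤ 1 := by
    calc ‖cross3 n (Pf e f t)‖ ≤ ‖n‖ * ‖Pf e f t‖ := norm_cross3_le _ _
      _ = 1 := by rw [norm_Pf he hf hef, hn]; ring
  have hnPd : ‖cross3 n (Pd e f t)‖ ≤ 1 := by
    calc ‖cross3 n (Pd e f t)‖ ≤ ‖n‖ * ‖Pd e f t‖ := norm_cross3_le _ _
      _ = 1 := by rw [norm_Pd he hf hef, hn]; ring
  have e1 : ‖(⟪Pd e f t, n⟫ * sin (th ρ t) + ⟪Pf e f t, n⟫ * (cos (th ρ t) * thd ρ t)) • n‖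
      ≤ 1 + |thd ρ t| := by
    rw [norm_smul, hn, mul_one, Real.norm_eq_abs]
    refine le_trans (abs_add_le _ _) ?_
    have i1 : |⟪Pd e f t, n⟫ * sin (th ρ t)| ≤ 1 := by
      rw [abs_mul]
      nlinarith [inner_Pd_n_bound he hf hef hn (t := t), abs_nonneg (⟪Pd e f t, n⟫),
        abs_nonneg (sin (th ρ t))]
    have i2 : |⟪Pf e f t, n⟫ * (cos (th ρ t) * thd ρ t)| ≤ |thd ρ t| := by
      rw [abs_mul, abs_mul]
      have hip := inner_Pf_n_bound he hf hef hn (t := t)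
      have h1 : |cos (th ρ t)| * |thd ρ t| ≤ |thd ρ t| := mul_le_of_le_one_left T0 hc1
      have h2 : |⟪Pf e f t, n⟫| * (|cos (th ρ t)| * |thd ρ t|) ≤ 1 * (|cos (th ρ t)| * |thd ρ t|) :=
        mul_le_mul_of_nonneg_right hip (by positivity)
      nlinarith
    linarith
  have e2 : ‖(-(cos (th ρ t) * thd ρ t)) • Pf e f t‖ ≤ |thd ρ t| := by
    rw [norm_smul, norm_Pf he hf hef, mul_one, Real.norm_eq_abs, abs_neg, abs_mul]
    exact mul_le_of_le_one_left T0 hc1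
  have e3 : ‖(-sin (th ρ t)) • Pd e f t‖ ≤ 1 := by
    rw [norm_smul, norm_Pd he hf hef, mul_one, Real.norm_eq_abs, abs_neg]
    exact hs1
  have e4 : ‖(-(sin (th ρ t) * thd ρ t)) • cross3 n (Pf e f t)‖ ≤ |thd ρ t| := by
    rw [norm_smul, Real.norm_eq_abs, abs_neg, abs_mul]
    have h1 : |sin (th ρ t)| * |thd ρ t| ≤ |thd ρ t| := mul_le_of_le_one_left T0 hs1
    have h2 : |sin (th ρ t)| * |thd ρ t| * ‖cross3 n (Pf e f t)‖
        ≤ |sin (th ρ t)| * |thd ρ t| * 1 := by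
      refine mul_le_mul_of_nonneg_left hnP (by positivity)
    nlinarith
  have e5 : ‖cos (th ρ t) • cross3 n (Pd e f t)‖ ≤ 1 := by
    rw [norm_smul, Real.norm_eq_abs]
    have h2 : |cos (th ρ t)| * ‖cross3 n (Pd e f t)‖ ≤ |cos (th ρ t)| * 1 :=
      mul_le_mul_of_nonneg_left hnPd (abs_nonneg _)
    nlinarith
  calc ‖_ + _ + _ + _ + _‖ ≤ _ := norm_add_le _ _
    _ ≤ _ := by
        refine add_le_add (le_trans (norm_add_le _ _) (add_le_add (le_trans (norm_add_le _ _)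
          (add_le_add (le_trans (norm_add_le _ _) (add_le_add e1 e2)) e3)) e4)) e5
    _ ≤ 3 + 3 * |thd ρ t| := by linarith

include he hf hef hn in
lemma norm_ud_le : ‖ud n e f ρ t‖ ≤ 1 + 3 * |thd ρ t| := by
  rw [ud]
  refine le_trans (norm_add_le _ _) ?_
  have h1 : ‖Rot n (cos (th ρ t)) (sin (th ρ t)) (Pd e f t)‖ = 1 := by
    rw [norm_Rot hn _ _ (Real.cos_sq_add_sin_sq _), norm_Pd he hf hef]
  have h2 : ‖thd ρ t • Bf n e f ρ t‖ ≤ 3 * |thd ρ t| := by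
    rw [norm_smul, Real.norm_eq_abs]
    nlinarith [norm_Bf_le he hf hef hn (ρ := ρ) (t := t), abs_nonneg (thd ρ t),
      norm_nonneg (Bf n e f ρ t)]
  linarith

include he hf hef hn in
lemma norm_Cf_le : ‖Cf n e f ρ t‖ ≤ 3 := by
  rw [Cf]
  calc ‖cross3 (uf n e f ρ t) (Bf n e f ρ t)‖ ≤ ‖uf n e f ρ t‖ * ‖Bf n e f ρ t‖ :=
        norm_cross3_le _ _
    _ ≤ 3 := by
        rw [norm_uf he hf hef hn]
        simpa using norm_Bf_le he hf hef hn (ρ := ρ) (t := t)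

include he hf hef hn in
lemma norm_Cd_le : ‖Cd n e f ρ t‖ ≤ 6 + 12 * |thd ρ t| := by
  rw [Cd]
  refine le_trans (norm_add_le _ _) ?_
  have T0 : (0:ℝ) ≤ |thd ρ t| := abs_nonneg _
  have h1 : ‖cross3 (ud n e f ρ t) (Bf n e f ρ t)‖ ≤ (1 + 3 * |thd ρ t|) * 3 := by
    refine le_trans (norm_cross3_le _ _) ?_
    have := norm_ud_le he hf hef hn (ρ := ρ) (t := t)
    have := norm_Bf_le he hf hef hn (ρ := ρ) (t := t)
    nlinarith [norm_nonneg (ud n e f ρ t), norm_nonneg (Bf n e f ρ t)]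
  have h2 : ‖cross3 (uf n e f ρ t) (Bdf n e f ρ t)‖ ≤ 3 + 3 * |thd ρ t| := by
    refine le_trans (norm_cross3_le _ _) ?_
    rw [norm_uf he hf hef hn]
    simpa using norm_Bdf_le he hf hef hn (ρ := ρ) (t := t)
  linarith

end bounds
end

noncomputable section
open Real

section ebound
variable {n e f g : E3} {ρ M : ℝ}
variable (he : ‖e‖ = 1) (hf : ‖f‖ = 1) (hef : ⟪e,f⟫ = 0) (hn : ‖n‖ = 1) (hg : ‖g‖ = 1)
variable (hρ : 1 ≤ ρ) (hM1 : 1 ≤ M) (hMb : ∀ x : ℝ, |std x| ≤ M ∧ |stdd x| ≤ M)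

include he hf hef hn hg in
lemma wnormsq_bound (t : ℝ) :
    |‖Gf n g ρ t + thd ρ t • Cf n e f ρ t‖^2 - 1| ≤ 6 * |thd ρ t| + 9 * |thd ρ t|^2 := by
  have hGf : ‖Gf n g ρ t‖ = 1 := by
    rw [Gf, norm_Rot hn _ _ (Real.cos_sq_add_sin_sq _), hg]
  have hCf := norm_Cf_le he hf hef hn (ρ := ρ) (t := t)
  have hip : |⟪Gf n g ρ t, Cf n e f ρ t⟫| ≤ 3 := by
    refine le_trans (abs_real_inner_le_norm _ _) ?_
    rw [hGf, one_mul]; exact hCf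
  have hexp : ‖Gf n g ρ t + thd ρ t • Cf n e f ρ t‖^2
      = 1 + 2 * (thd ρ t * ⟪Gf n g ρ t, Cf n e f ρ t⟫)
        + (thd ρ t)^2 * ‖Cf n e f ρ t‖^2 := by
    rw [norm_add_sq_real, hGf, real_inner_smul_right, norm_smul, Real.norm_eq_abs]
    rw [mul_pow, sq_abs]
    ring
  rw [hexp]
  have h1 : |thd ρ t * ⟪Gf n g ρ t, Cf n e f ρ t⟫| ≤ |thd ρ t| * 3 := by
    rw [abs_mul]
    exact mul_le_mul_of_nonneg_left hip (abs_nonneg _)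
  have h2 : (thd ρ t)^2 * ‖Cf n e f ρ t‖^2 ≤ |thd ρ t|^2 * 9 := by
    rw [sq_abs]
    have h9 : ‖Cf n e f ρ t‖^2 ≤ 9 := by nlinarith [norm_nonneg (Cf n e f ρ t)]
    exact mul_le_mul_of_nonneg_left h9 (sq_nonneg _)
  rw [abs_le]
  constructor
  · nlinarith [neg_abs_le (thd ρ t * ⟪Gf n g ρ t, Cf n e f ρ t⟫), sq_nonneg (thd ρ t),
      mul_nonneg (sq_nonneg (thd ρ t)) (sq_nonneg (‖Cf n e f ρ t‖))]
  · nlinarith [le_abs_self (thd ρ t * ⟪Gf n g ρ t, Cf n e f ρ t⟫)]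

include he hf hef hn hg in
lemma norm_wd_le (t : ℝ) : ‖wd n e f g ρ t‖
    ≤ 3 * |thd ρ t| + (|thd ρ t| * (6 + 12 * |thd ρ t|) + 3 * |thdd ρ t|) := by
  rw [wd]
  refine le_trans (norm_add_le _ _) ?_
  have h1 : ‖thd ρ t • B1f n g ρ t‖ ≤ 3 * |thd ρ t| := by
    rw [norm_smul, Real.norm_eq_abs]
    nlinarith [norm_B1f_le hn hg (ρ := ρ) (t := t), abs_nonneg (thd ρ t),
      norm_nonneg (B1f n g ρ t)]
  have h2 : ‖thd ρ t • Cd n e f ρ t‖ ≤ |thd ρ t| * (6 + 12 * |thd ρ t|) := by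
    rw [norm_smul, Real.norm_eq_abs]
    exact mul_le_mul_of_nonneg_left (norm_Cd_le he hf hef hn) (abs_nonneg _)
  have h3 : ‖thdd ρ t • Cf n e f ρ t‖ ≤ 3 * |thdd ρ t| := by
    rw [norm_smul, Real.norm_eq_abs]
    nlinarith [norm_Cf_le he hf hef hn (ρ := ρ) (t := t), abs_nonneg (thdd ρ t),
      norm_nonneg (Cf n e f ρ t)]
  refine le_trans (add_le_add h1 (le_trans (norm_add_le _ _) (add_le_add h2 h3))) ?_
  linarith

include he hf hef hn hg hρ hM1 hMb in
lemma E_bound (t : ℝ) :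
    ((‖Gf n g ρ t + thd ρ t • Cf n e f ρ t‖^2 - 1)^2 + ‖wd n e f g ρ t‖^2) * ρ^2
      ≤ 740000 * M^4 := by
  have hρ0 : (0:ℝ) < ρ := lt_of_lt_of_le one_pos hρ
  have hT := (thd_bound hρ hM1 hMb (t := t)).1
  have hD := (thd_bound hρ hM1 hMb (t := t)).2
  have T0 : (0:ℝ) ≤ |thd ρ t| := abs_nonneg _
  have D0 : (0:ℝ) ≤ |thdd ρ t| := abs_nonneg _
  have hTM : |thd ρ t| ≤ 7 * M := by nlinarith
  have hM0 : (0:ℝ) < M := lt_of_lt_of_le one_pos hM1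
  have ha := wnormsq_bound he hf hef hn hg (ρ := ρ) t
  have hb := norm_wd_le he hf hef hn hg (ρ := ρ) t
  have hTT : |thd ρ t| * (|thd ρ t| * ρ) ≤ (7*M) * (7*M) :=
    mul_le_mul hTM hT (by positivity) (by positivity)
  have hMM : M ≤ M^2 := by nlinarith
  have haρ : |‖Gf n g ρ t + thd ρ t • Cf n e f ρ t‖^2 - 1| * ρ ≤ 500 * M^2 := by
    have step : |‖Gf n g ρ t + thd ρ t • Cf n e f ρ t‖^2 - 1| * ρ
        ≤ (6 * |thd ρ t| + 9 * |thd ρ t|^2) * ρ :=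
      mul_le_mul_of_nonneg_right ha (le_of_lt hρ0)
    refine le_trans step ?_
    have expand : (6 * |thd ρ t| + 9 * |thd ρ t|^2) * ρ
        = 6 * (|thd ρ t| * ρ) + 9 * (|thd ρ t| * (|thd ρ t| * ρ)) := by ring
    rw [expand]
    nlinarith
  have hbρ : ‖wd n e f g ρ t‖ * ρ ≤ 700 * M^2 := by
    have step : ‖wd n e f g ρ t‖ * ρ
        ≤ (3 * |thd ρ t| + (|thd ρ t| * (6 + 12 * |thd ρ t|) + 3 * |thdd ρ t|)) * ρ :=
      mul_le_mul_of_nonneg_right hb (le_of_lt hρ0)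
    refine le_trans step ?_
    have expand : (3 * |thd ρ t| + (|thd ρ t| * (6 + 12 * |thd ρ t|) + 3 * |thdd ρ t|)) * ρ
        = 9 * (|thd ρ t| * ρ) + 12 * (|thd ρ t| * (|thd ρ t| * ρ)) + 3 * (|thdd ρ t| * ρ) := by
      ring
    rw [expand]
    nlinarith
  have hA2 : (|‖Gf n g ρ t + thd ρ t • Cf n e f ρ t‖^2 - 1| * ρ) * (|‖Gf n g ρ t + thd ρ t • Cf n e f ρ t‖^2 - 1| * ρ) ≤ (500 * M^2) * (500 * M^2) :=
    mul_self_le_mul_self (by positivity) haρ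
  have hB2 : (‖wd n e f g ρ t‖ * ρ) * (‖wd n e f g ρ t‖ * ρ) ≤ (700 * M^2) * (700 * M^2) :=
    mul_self_le_mul_self (by positivity) hbρ
  have hsq : (‖Gf n g ρ t + thd ρ t • Cf n e f ρ t‖^2 - 1)^2
      = |‖Gf n g ρ t + thd ρ t • Cf n e f ρ t‖^2 - 1|^2 := (sq_abs _).symm
  nlinarith [sq_nonneg ρ]

end ebound

lemma inner_cross3_right_self (a b : E3) : ⟪a, cross3 b a⟫ = 0 := by
  simp only [inner3, cross3_apply0, cross3_apply1, cross3_apply2]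
  ring


lemma exists_unit_orthogonal (z : E3) (hz : ‖z‖ = 1) : ∃ e : E3, ‖e‖ = 1 ∧ ⟪z, e⟫ = 0 := by
  have hz0 : z ≠ 0 := by intro h; rw [h, norm_zero] at hz; norm_num at hz
  have hdim : Module.finrank ℝ E3 = 3 := by simp
  have h1 : Module.finrank ℝ (ℝ ∙ z) = 1 := finrank_span_singleton hz0
  have h2 : Module.finrank ℝ ((ℝ ∙ z)ᗮ) = 2 := by
    have := Submodule.finrank_add_finrank_orthogonal ((ℝ ∙ z) : Submodule ℝ E3)
    omega
  have h3 : 0 < Module.finrank ℝ ((ℝ ∙ z)ᗮ) := by omega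
  obtain ⟨⟨v, hv⟩, hv0⟩ := Module.finrank_pos_iff_exists_ne_zero.mp h3
  have hvne : v ≠ 0 := by simpa using hv0
  refine ⟨‖v‖⁻¹ • v, ?_, ?_⟩
  · rw [norm_smul]; simp [norm_ne_zero_iff.mpr hvne, inv_mul_cancel₀]
  · rw [real_inner_smul_right]
    have : ⟪z, v⟫ = 0 := by
      exact hv z (Submodule.mem_span_singleton_self z)
    rw [this]; ring

lemma exists_axis (g z₂ : E3) (hg : ‖g‖ = 1) (hz₂ : ‖z₂‖ = 1) :
    ∃ nn : E3, ‖nn‖ = 1 ∧ (2 * ⟪g, nn⟫) • nn - g = z₂ := by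
  by_cases hcase : g + z₂ = 0
  · obtain ⟨ee, hee, heg⟩ := exists_unit_orthogonal g hg
    refine ⟨ee, hee, ?_⟩
    rw [heg]
    have hz : z₂ = -g := by
      have h := hcase
      rw [add_eq_zero_iff_eq_neg] at h
      rw [h, neg_neg]
    rw [hz]
    simp
  · set sv : E3 := g + z₂ with hsv
    have hsv0 : sv ≠ 0 := hcase
    have hnorm0 : ‖sv‖ ≠ 0 := norm_ne_zero_iff.mpr hsv0
    have hs2 : ‖sv‖^2 = 2 + 2 * ⟪g, z₂⟫ := by
      rw [hsv, norm_add_sq_real, hg, hz₂]; ring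
    have hgs : ⟪g, sv⟫ = 1 + ⟪g, z₂⟫ := by
      rw [hsv, inner_add_right, real_inner_self_eq_norm_sq, hg]; norm_num
    refine ⟨‖sv‖⁻¹ • sv, ?_, ?_⟩
    · rw [norm_smul, norm_inv, norm_norm, inv_mul_cancel₀ hnorm0]
    · rw [real_inner_smul_right, smul_smul]
      have hcoef : 2 * (‖sv‖⁻¹ * ⟪g, sv⟫) * ‖sv‖⁻¹ = (2 + 2*⟪g, z₂⟫) / ‖sv‖^2 := by
        rw [hgs]; field_simp
      rw [hcoef, ← hs2, div_self (by positivity : ‖sv‖^2 ≠ 0), one_smul, hsv]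
      abel

lemma contDiff_uf (n e f : E3) (ρ : ℝ) : ContDiff ℝ 2 (uf n e f ρ) := by
  have hag : ContDiff ℝ 2 (ag ρ) := by
    unfold ag
    exact (contDiff_const.mul (contDiff_id.div_const ρ)).sub contDiff_const
  have hth : ContDiff ℝ 2 (th ρ) := by
    unfold th
    exact contDiff_const.mul ((st_contDiff (m := 2)).comp hag)
  have hcth : ContDiff ℝ 2 (fun t => cos (th ρ t)) := Real.contDiff_cos.comp hth
  have hsth : ContDiff ℝ 2 (fun t => sin (th ρ t)) := Real.contDiff_sin.comp hth
  have hP : ContDiff ℝ 2 (Pf e f) := by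
    unfold Pf
    exact (Real.contDiff_cos.smul contDiff_const).add (Real.contDiff_sin.smul contDiff_const)
  have hinner : ContDiff ℝ 2 (fun t => ⟪Pf e f t, n⟫) :=
    ContDiff.inner ℝ hP contDiff_const
  have hcr : ContDiff ℝ 2 (fun t => cross3 n (Pf e f t)) := by
    have : ContDiff ℝ 2 (fun t => crossL n (Pf e f t)) := (crossL n).contDiff.comp hP
    simpa using this
  unfold uf Rot
  exact (((hinner.mul (contDiff_const.sub hcth)).smul contDiff_const).add
    (hcth.smul hP)).add (hsth.smul hcr)

end

open MeasureTheory Filter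


/-- For every pair of unit vectors `z₁ z₂ ∈ S²` and every `ε > 0` there are
`ρ > 0` and a `C²` map `u : ℝ → ℝ³` with values in `S²` whose chirality `w = u × u'`
equals `z₁` for `t ≤ 0`, equals `z₂` for `t ≥ ρ`, and whose transition energy is at most `ε`.
Hence the optimal transition energy between any two chiralities is zero. -/
theorem stmt0 (z₁ z₂ : EuclideanSpace ℝ (Fin 3)) (hz₁ : ‖z₁‖ = 1) (hz₂ : ‖z₂‖ = 1)
    (ε : ℝ) (hε : 0 < ε) :
    ∃ ρ : ℝ, 0 < ρ ∧ ∃ u : ℝ → EuclideanSpace ℝ (Fin 3), ContDiff ℝ 2 u ∧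
      (∀ t : ℝ, ‖u t‖ = 1) ∧
      (∀ t : ℝ, t ≤ 0 → cross3 (u t) (deriv u t) = z₁) ∧
      (∀ t : ℝ, ρ ≤ t → cross3 (u t) (deriv u t) = z₂) ∧
      (∫⁻ t : ℝ, ENNReal.ofReal ((‖cross3 (u t) (deriv u t)‖ ^ 2 - 1) ^ 2
          + ‖deriv (fun s => cross3 (u s) (deriv u s)) t‖ ^ 2)
        ≤ ENNReal.ofReal ε) := by
  obtain ⟨e, he, hz1e⟩ := exists_unit_orthogonal z₁ hz₁
  set f : E3 := cross3 z₁ e with hfdef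
  have hf : ‖f‖ = 1 := by
    apply norm_eq_one_of_sq
    rw [hfdef, cross3_lagrange, hz₁, he, hz1e]
    norm_num
  have hef : ⟪e, f⟫ = 0 := inner_cross3_right_self e z₁
  have hgef : cross3 e f = z₁ := by
    rw [hfdef, cross3_bac_cab, real_inner_self_eq_norm_sq, he, real_inner_comm, hz1e]
    simp
  obtain ⟨nn, hnn, hax⟩ := exists_axis z₁ z₂ hz₁ hz₂
  obtain ⟨M, hM1, hMb⟩ := exists_bound_st
  have hMb' : ∀ x : ℝ, |std x| ≤ M ∧ |stdd x| ≤ M := hMb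
  set K : ℝ := 740000 * M^4 with hKdef
  have hM0 : (0:ℝ) < M := lt_of_lt_of_le one_pos hM1
  have hK0 : (0:ℝ) < K := by positivity
  set ρ : ℝ := max 1 (K / ε) with hρdef
  have hρ1 : (1:ℝ) ≤ ρ := le_max_left _ _
  have hρ0 : (0:ℝ) < ρ := lt_of_lt_of_le one_pos hρ1
  have hKρε : K / ρ ≤ ε := by
    rw [div_le_iff₀ hρ0]
    calc K = ε * (K / ε) := by field_simp
      _ ≤ ε * ρ := mul_le_mul_of_nonneg_left (le_max_right _ _) (le_of_lt hε)
  refine ⟨ρ, hρ0, uf nn e f ρ, contDiff_uf nn e f ρ, fun t => norm_uf he hf hef hnn ρ t, ?_, ?_, ?_⟩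
  · -- t ≤ 0
    intro t ht
    have hderiv : deriv (uf nn e f ρ) = ud nn e f ρ :=
      funext fun s => (hasDerivAt_uf nn e f ρ s).deriv
    obtain ⟨h1, h2⟩ := uf_of_neg nn e f hρ0 ht
    rw [hderiv, h1, h2, cross3_Pf_Pd, hgef]
  · -- ρ ≤ t
    intro t ht
    have hderiv : deriv (uf nn e f ρ) = ud nn e f ρ :=
      funext fun s => (hasDerivAt_uf nn e f ρ s).deriv
    obtain ⟨h1, h2⟩ := uf_of_ge nn e f hρ0 ht
    rw [hderiv, h1, h2,
      Rot_cross nn _ _ (comp_of_norm hnn) (by norm_num : (-1:ℝ)^2 + (0:ℝ)^2 = 1),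
      cross3_Pf_Pd, hgef, Rot_pi, hax]
  · -- the energy estimate
    have hderiv : deriv (uf nn e f ρ) = ud nn e f ρ :=
      funext fun s => (hasDerivAt_uf nn e f ρ s).deriv
    have hptw : ∀ x : ℝ, cross3 (uf nn e f ρ x) (ud nn e f ρ x)
        = Gf nn z₁ ρ x + thd ρ x • Cf nn e f ρ x := by
      intro x
      have h := congrFun (w_eq he hf hef hnn ρ) x
      simp only [hgef] at h
      exact h
    have hlam : (fun s => cross3 (uf nn e f ρ s) (ud nn e f ρ s))
        = (fun x => Gf nn z₁ ρ x + thd ρ x • Cf nn e f ρ x) := funext hptw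
    rw [hderiv, hlam]
    have hstep : (∫⁻ t : ℝ, ENNReal.ofReal ((‖cross3 (uf nn e f ρ t) (ud nn e f ρ t)‖ ^ 2 - 1) ^ 2
          + ‖deriv (fun x => Gf nn z₁ ρ x + thd ρ x • Cf nn e f ρ x) t‖ ^ 2))
        = ∫⁻ t : ℝ, ENNReal.ofReal ((‖Gf nn z₁ ρ t + thd ρ t • Cf nn e f ρ t‖ ^ 2 - 1) ^ 2
          + ‖wd nn e f z₁ ρ t‖ ^ 2) := by
      refine lintegral_congr fun t => ?_
      rw [hptw t, (hasDerivAt_w nn e f z₁ ρ t).deriv]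
    rw [hstep]
    have hpoint : ∀ t : ℝ, ENNReal.ofReal ((‖Gf nn z₁ ρ t + thd ρ t • Cf nn e f ρ t‖ ^ 2 - 1) ^ 2
          + ‖wd nn e f z₁ ρ t‖ ^ 2)
        ≤ (Set.Icc (0:ℝ) ρ).indicator (fun _ => ENNReal.ofReal (K / ρ^2)) t := by
      intro t
      by_cases hmem : t ∈ Set.Icc (0:ℝ) ρ
      · rw [Set.indicator_of_mem hmem]
        apply ENNReal.ofReal_le_ofReal
        rw [le_div_iff₀ (by positivity : (0:ℝ) < ρ^2)]
        exact E_bound he hf hef hnn hz₁ hρ1 hM1 hMb' t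
      · rw [Set.indicator_of_notMem hmem]
        have hcase : t < 0 ∨ ρ < t := by
          simp only [Set.mem_Icc, not_and_or, not_le] at hmem
          tauto
        have hz : (‖Gf nn z₁ ρ t + thd ρ t • Cf nn e f ρ t‖ ^ 2 - 1) ^ 2
            + ‖wd nn e f z₁ ρ t‖ ^ 2 = 0 := by
          rcases hcase with hc | hc
          · obtain ⟨h1, h2, h3⟩ := th_of_neg hρ0 (le_of_lt hc)
            have hG : Gf nn z₁ ρ t = z₁ := by
              rw [Gf, h1, Real.cos_zero, Real.sin_zero, Rot_id]
            have hwd : wd nn e f z₁ ρ t = 0 := by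
              rw [wd, h2, h3]
              simp
            rw [hG, h2, hwd]
            simp only [zero_smul, add_zero, hz₁, norm_zero]
            norm_num
          · obtain ⟨h1, h2, h3⟩ := th_of_ge hρ0 (le_of_lt hc)
            have hG : ‖Gf nn z₁ ρ t‖ = 1 := by
              rw [Gf, norm_Rot hnn _ _ (Real.cos_sq_add_sin_sq _), hz₁]
            have hwd : wd nn e f z₁ ρ t = 0 := by
              rw [wd, h2, h3]
              simp
            rw [h2, hwd]
            simp only [zero_smul, add_zero, hG]
            norm_num
        rw [hz]
        simp
    calc ∫⁻ t : ℝ, ENNReal.ofReal ((‖Gf nn z₁ ρ t + thd ρ t • Cf nn e f ρ t‖ ^ 2 - 1) ^ 2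
          + ‖wd nn e f z₁ ρ t‖ ^ 2)
        ≤ ∫⁻ t : ℝ, (Set.Icc (0:ℝ) ρ).indicator (fun _ => ENNReal.ofReal (K / ρ^2)) t :=
          lintegral_mono hpoint
      _ = ENNReal.ofReal (K / ρ^2) * volume (Set.Icc (0:ℝ) ρ) := by
          rw [lintegral_indicator_const measurableSet_Icc]
      _ = ENNReal.ofReal (K / ρ^2) * ENNReal.ofReal (ρ - 0) := by rw [Real.volume_Icc]
      _ = ENNReal.ofReal (K / ρ^2 * (ρ - 0)) := by
          rw [ENNReal.ofReal_mul (by positivity : (0:ℝ) ≤ K / ρ^2)]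
      _ ≤ ENNReal.ofReal ε := by
          apply ENNReal.ofReal_le_ofReal
          have : K / ρ^2 * (ρ - 0) = K / ρ := by field_simp; ring
          rw [this]
          exact hKρε
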